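/- arXiv:0805.3513 — 10 statements merged into one kernel-verified Lean document; each statement's English description precedes it below -/
import Mathlib

section
/- Let H be a complex Hilbert space and S an MI-space in B(H) with dim S > 1 (i.e., S contains two linearly independent operators). Then for every nonzero A ∈ S, the orthogonal complement of the range of A is infinite-dimensional. -/
open scoped ComplexInnerProductSpace

/-- `A` is a scalar multiple of an isometry. -/
def ScalarMultipleOfIsometry {H : Type*} [NormedAddCommGroup H] [InnerProductSpace ℂ H]
    (A : H →L[ℂ] H) : Prop :=
  ∃ (c : ℂ) (V : H →L[ℂ] H), Isometry V ∧ A = c • V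

lemma norm_const_of_smi {H : Type*} [NormedAddCommGroup H] [InnerProductSpace ℂ H]
    {T : H →L[ℂ] H} (hT : ScalarMultipleOfIsometry T) :
    ∃ k : ℝ, ∀ x, ‖T x‖ = k * ‖x‖ := by
  obtain ⟨c, V, hV, rfl⟩ := hT
  refine ⟨‖c‖, fun x => ?_⟩
  have hVn : ‖V x‖ = ‖x‖ := hV.norm_map_of_map_zero (map_zero V) x
  simp [norm_smul, hVn]

lemma key_gamma {H : Type*} [NormedAddCommGroup H] [InnerProductSpace ℂ H] [CompleteSpace H]
    (S : Submodule ℂ (H →L[ℂ] H))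
    (hS : ∀ T ∈ S, ScalarMultipleOfIsometry T)
    {A B : H →L[ℂ] H} (hA : A ∈ S) (hB : B ∈ S) :
    ∃ γ : ℂ, ∀ x y, ⟪A x, B y⟫ = γ * ⟪x, y⟫ := by
  obtain ⟨k₁, hk₁⟩ := norm_const_of_smi (hS (A + B) (S.add_mem hA hB))
  obtain ⟨k₂, hk₂⟩ := norm_const_of_smi (hS (A - B) (S.sub_mem hA hB))
  obtain ⟨k₃, hk₃⟩ := norm_const_of_smi
    (hS (A - (RCLike.I : ℂ) • B) (S.sub_mem hA (S.smul_mem _ hB)))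
  obtain ⟨k₄, hk₄⟩ := norm_const_of_smi
    (hS (A + (RCLike.I : ℂ) • B) (S.add_mem hA (S.smul_mem _ hB)))
  set γ : ℂ := (((RCLike.ofReal k₁ : ℂ) ^ 2 - (RCLike.ofReal k₂ : ℂ) ^ 2) + ((RCLike.ofReal k₃ : ℂ) ^ 2 - (RCLike.ofReal k₄ : ℂ) ^ 2) * (RCLike.I : ℂ)) / 4
    with hγdef
  have hdiag : ∀ x, ⟪A x, B x⟫ = γ * ⟪x, x⟫ := by
    intro x
    have hpol := inner_eq_sum_norm_sq_div_four (𝕜 := ℂ) (A x) (B x)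
    have e₁ : A x + B x = (A + B) x := rfl
    have e₂ : A x - B x = (A - B) x := rfl
    have e₃ : A x - (RCLike.I : ℂ) • B x = (A - (RCLike.I : ℂ) • B) x := rfl
    have e₄ : A x + (RCLike.I : ℂ) • B x = (A + (RCLike.I : ℂ) • B) x := rfl
    rw [hpol, inner_self_eq_norm_sq_to_K, e₁, e₂, e₃, e₄, hk₁, hk₂, hk₃, hk₄, hγdef]
    push_cast
    ring
  have hop : ((ContinuousLinearMap.adjoint B).comp A : H →ₗ[ℂ] H)
      = (starRingEnd ℂ) γ • (LinearMap.id : H →ₗ[ℂ] H) := by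
    rw [← ext_inner_map]
    intro x
    have h1 : ⟪((ContinuousLinearMap.adjoint B).comp A : H →ₗ[ℂ] H) x, x⟫
        = ⟪A x, B x⟫ := by
      simp only [LinearMap.coe_comp, ContinuousLinearMap.coe_coe, Function.comp_apply,
        ContinuousLinearMap.comp_apply]
      exact ContinuousLinearMap.adjoint_inner_left B x (A x)
    rw [h1, hdiag]
    simp [inner_smul_left]
  refine ⟨γ, fun x y => ?_⟩
  have h2 : (ContinuousLinearMap.adjoint B) (A x) = (starRingEnd ℂ) γ • x := by
    have := congrFun (congrArg (fun f : H →ₗ[ℂ] H => (f : H → H)) hop) x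
    simpa using this
  rw [← ContinuousLinearMap.adjoint_inner_left B y (A x), h2, inner_smul_left,
    Complex.conj_conj]

theorem stmt_4 {H : Type*} [NormedAddCommGroup H] [InnerProductSpace ℂ H] [CompleteSpace H]
    (S : Submodule ℂ (H →L[ℂ] H))
    (hS : ∀ T ∈ S, ScalarMultipleOfIsometry T)
    (hdim : ∃ A ∈ S, ∃ B ∈ S, LinearIndependent ℂ ![A, B]) :
    ∀ A ∈ S, A ≠ 0 → ¬ FiniteDimensional ℂ (LinearMap.range (A : H →ₗ[ℂ] H))ᗮ := by
  intro A hA hA0 hfd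
  -- find B ∈ S not a multiple of A
  have hBex : ∃ B ∈ S, ∀ c : ℂ, c • A ≠ B := by
    by_contra h
    push_neg at h
    obtain ⟨A₀, hA₀, B₀, hB₀, hind⟩ := hdim
    rw [linearIndependent_fin2] at hind
    simp only [Matrix.cons_val_one, Matrix.head_cons, Matrix.cons_val_zero] at hind
    obtain ⟨s, hs⟩ := h A₀ hA₀
    obtain ⟨t, ht⟩ := h B₀ hB₀
    have ht0 : t ≠ 0 := by
      rintro rfl
      exact hind.1 (by simpa using ht.symm)
    refine hind.2 (s * t⁻¹) ?_
    rw [← ht, ← hs, smul_smul, mul_assoc, inv_mul_cancel₀ ht0, mul_one]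
  obtain ⟨B, hB, hBA⟩ := hBex
  obtain ⟨α, hα⟩ := key_gamma S hS hA hA
  obtain ⟨δ, hδ⟩ := key_gamma S hS hA hB
  -- a nonzero vector where A doesn't vanish
  have hx₀ : ∃ x₀, A x₀ ≠ 0 := by
    by_contra h
    push_neg at h
    exact hA0 (ContinuousLinearMap.ext fun x => by simp [h x])
  obtain ⟨x₀, hx₀⟩ := hx₀
  have hαne : α ≠ 0 := by
    rintro rfl
    have := hα x₀ x₀
    rw [zero_mul, inner_self_eq_zero] at this
    exact hx₀ this
  set B' : H →L[ℂ] H := B - (δ / α) • A with hB'def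
  have hB'S : B' ∈ S := S.sub_mem hB (S.smul_mem _ hA)
  have hB'ne : B' ≠ 0 := by
    intro h
    refine hBA (δ / α) ?_
    rw [hB'def, sub_eq_zero] at h
    exact h.symm
  have horth : ∀ x y, ⟪A x, B' y⟫ = 0 := by
    intro x y
    rw [hB'def]
    simp only [ContinuousLinearMap.sub_apply, ContinuousLinearMap.smul_apply,
      inner_sub_right, inner_smul_right, hδ, hα]
    field_simp
    ring
  have hrange : LinearMap.range (B' : H →ₗ[ℂ] H) ≤ (LinearMap.range (A : H →ₗ[ℂ] H))ᗮ := by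
    rintro _ ⟨y, rfl⟩
    rw [Submodule.mem_orthogonal]
    rintro _ ⟨x, rfl⟩
    exact horth x y
  have hfd' : FiniteDimensional ℂ (LinearMap.range (B' : H →ₗ[ℂ] H)) :=
    Submodule.finiteDimensional_of_le hrange
  -- B' is injective
  obtain ⟨k', hk'⟩ := norm_const_of_smi (hS B' hB'S)
  have hk'ne : k' ≠ 0 := by
    rintro rfl
    refine hB'ne (ContinuousLinearMap.ext fun x => ?_)
    have := hk' x
    simp only [zero_mul, norm_eq_zero] at this
    simpa using this
  have hinjB' : Function.Injective B' := by
    rw [← ContinuousLinearMap.coe_coe, ← LinearMap.ker_eq_bot, LinearMap.ker_eq_bot',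
      ContinuousLinearMap.coe_coe]
    intro m hm
    have := hk' m
    rw [hm, norm_zero] at this
    have : ‖m‖ = 0 := by
      rcases mul_eq_zero.mp this.symm with h | h
      · exact absurd h hk'ne
      · exact h
    simpa using this
  have hfd'' : FiniteDimensional ℂ (LinearMap.range (B' : H →ₗ[ℂ] H)) := hfd'
  have hHfd : FiniteDimensional ℂ H :=
    LinearEquiv.finiteDimensional (LinearEquiv.ofInjective (B' : H →ₗ[ℂ] H) hinjB').symm
  -- A is injective, hence surjective
  obtain ⟨k, hk⟩ := norm_const_of_smi (hS A hA)
  have hkne : k ≠ 0 := by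
    rintro rfl
    have := hk x₀
    simp only [zero_mul, norm_eq_zero] at this
    exact hx₀ this
  have hinjA : Function.Injective A := by
    rw [← ContinuousLinearMap.coe_coe, ← LinearMap.ker_eq_bot, LinearMap.ker_eq_bot',
      ContinuousLinearMap.coe_coe]
    intro m hm
    have := hk m
    rw [hm, norm_zero] at this
    have : ‖m‖ = 0 := by
      rcases mul_eq_zero.mp this.symm with h | h
      · exact absurd h hkne
      · exact h
    simpa using this
  have hsurjA : Function.Surjective A :=
    LinearMap.injective_iff_surjective.mp hinjA
  have hrA : LinearMap.range (A : H →ₗ[ℂ] H) = (⊤ : Submodule ℂ H) :=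
    LinearMap.range_eq_top.mpr hsurjA
  have : B' x₀ = 0 := by
    have hy : B' x₀ ∈ (LinearMap.range (A : H →ₗ[ℂ] H))ᗮ := hrange ⟨x₀, rfl⟩
    rw [hrA, Submodule.top_orthogonal_eq_bot, Submodule.mem_bot] at hy
    exact hy
  have h0 := hk' x₀
  rw [this, norm_zero] at h0
  have hx0 : ‖x₀‖ = 0 := by
    rcases mul_eq_zero.mp h0.symm with h | h
    · exact absurd h hk'ne
    · exact h
  rw [norm_eq_zero] at hx0
  subst hx0
  simp at hx₀
end

section
/- Let H be a complex Hilbert space and S an MI-space in B(H). If the identity operator I belongs to S, then S = ℂ·I, the set of all scalar multiples of I. -/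
theorem stmt_6 {H : Type*} [NormedAddCommGroup H] [InnerProductSpace ℂ H] [CompleteSpace H]
    (S : Submodule ℂ (H →L[ℂ] H))
    (hS : ∀ T ∈ S, ScalarMultipleOfIsometry T)
    (hI : (1 : H →L[ℂ] H) ∈ S) :
    S = Submodule.span ℂ {(1 : H →L[ℂ] H)} := by
  apply le_antisymm
  · intro T hT
    -- key: every member has ‖A x‖ = k ‖x‖
    have key : ∀ A ∈ S, ∃ k : ℝ, ∀ x, ‖A x‖ = k * ‖x‖ := by
      intro A hA
      obtain ⟨c, V, hV, rfl⟩ := hS A hA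
      exact ⟨‖c‖, fun x => by
        simp [norm_smul, hV.norm_map_of_map_zero (map_zero V) x]⟩
    obtain ⟨k0, hk0⟩ := key T hT
    obtain ⟨k1, hk1⟩ := key (T + 1) (S.add_mem hT hI)
    obtain ⟨k2, hk2⟩ := key (T + Complex.I • 1) (S.add_mem hT (S.smul_mem _ hI))
    set a : ℝ := (k1 ^ 2 - k0 ^ 2 - 1) / 2 with ha
    set b : ℝ := (k2 ^ 2 - k0 ^ 2 - 1) / 2 with hb
    have hre : ∀ x : H, Complex.re (inner ℂ (T x) x : ℂ) = a * ‖x‖ ^ 2 := by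
      intro x
      have h := norm_add_sq (𝕜 := ℂ) (T x) x
      rw [show T x + x = (T + 1) x from rfl] at h
      rw [hk1 x, hk0 x] at h
      have : (k1 * ‖x‖) ^ 2 = (k0 * ‖x‖) ^ 2 + 2 * Complex.re (inner ℂ (T x) x : ℂ) + ‖x‖ ^ 2 := h
      rw [ha]; ring_nf; ring_nf at this; nlinarith [this]
    have him : ∀ x : H, Complex.im (inner ℂ (T x) x : ℂ) = -(b * ‖x‖ ^ 2) := by
      intro x
      have h := norm_add_sq (𝕜 := ℂ) (T x) (Complex.I • x)
      rw [show T x + Complex.I • x = (T + Complex.I • 1) x from rfl] at h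
      rw [hk2 x, hk0 x] at h
      have hinner : Complex.re (inner ℂ (T x) (Complex.I • x) : ℂ)
          = -Complex.im (inner ℂ (T x) x : ℂ) := by
        rw [inner_smul_right]
        simp [Complex.mul_re]
      simp only [RCLike.re_to_complex] at h
      rw [hinner, norm_smul] at h
      simp only [Complex.norm_I, one_mul] at h
      have : (k2 * ‖x‖) ^ 2
          = (k0 * ‖x‖) ^ 2 + 2 * -Complex.im (inner ℂ (T x) x : ℂ) + ‖x‖ ^ 2 := h
      rw [hb]; nlinarith [this]
    set μ : ℂ := Complex.mk a b with hμ
    have hTeq : T = μ • 1 := by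
      have heq : ∀ x : H, (inner ℂ (T x) x : ℂ) = inner ℂ ((μ • (1 : H →L[ℂ] H)) x) x := by
        intro x
        have h1 : ((μ • (1 : H →L[ℂ] H)) x) = μ • x := rfl
        rw [h1, inner_smul_left, inner_self_eq_norm_sq_to_K]
        apply Complex.ext
        · rw [hre x]
          simp [hμ, Complex.mul_re, ← Complex.ofReal_pow]
        · rw [him x]
          simp [hμ, Complex.mul_im, ← Complex.ofReal_pow]
      have := (ext_inner_map (T : H →ₗ[ℂ] H) ((μ • (1 : H →L[ℂ] H)) : H →ₗ[ℂ] H)).mp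
        (fun x => heq x)
      exact ContinuousLinearMap.coe_injective this
    rw [hTeq]
    exact Submodule.smul_mem _ _ (Submodule.mem_span_singleton_self _)
  · rw [Submodule.span_le, Set.singleton_subset_iff]
    exact hI
end

section
/- Let H be a complex Hilbert space and S an MI-space in B(H). If A ∈ S is nonzero and the adjoint A* also belongs to S, then S = span(A). Consequently an MI-space of dimension greater than one contains the adjoint of none of its nonzero elements. -/
theorem stmt_11 {H : Type*} [NormedAddCommGroup H] [InnerProductSpace ℂ H] [CompleteSpace H]
    (S : Submodule ℂ (H →L[ℂ] H))
    (hS : ∀ T ∈ S, ScalarMultipleOfIsometry T)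
    (A : H →L[ℂ] H) (hA : A ∈ S) (hA0 : A ≠ 0)
    (hAstar : ContinuousLinearMap.adjoint A ∈ S) :
    S = Submodule.span ℂ {A} := by
  classical
  -- Step 1: every element of S satisfies T* T = r • 1, with r ≠ 0 when T ≠ 0.
  have key : ∀ T ∈ S, ∃ r : ℂ, star T * T = r • 1 ∧ (T ≠ 0 → r ≠ 0) := by
    intro T hT
    obtain ⟨c, V, hV, rfl⟩ := hS T hT
    have hVV : star V * V = 1 :=
      (ContinuousLinearMap.norm_map_iff_adjoint_comp_self V).mp
        (fun x => hV.norm_map_of_map_zero (map_zero V) x)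
    refine ⟨star c * c, ?_, ?_⟩
    · rw [star_smul, smul_mul_smul_comm, hVV]
    · intro hT0 hc
      rcases mul_eq_zero.mp hc with h | h
      · exact hT0 (by simp [star_eq_zero.mp h])
      · exact hT0 (by simp [h])
  have hstar : ∀ T : H →L[ℂ] H, star T = ContinuousLinearMap.adjoint T := fun T => rfl
  -- Step 2: A A* = s • 1 with s ≠ 0.
  obtain ⟨s, hs, hs0⟩ := key (ContinuousLinearMap.adjoint A) hAstar
  rw [← hstar, star_star] at hs
  have hAadj0 : ContinuousLinearMap.adjoint A ≠ 0 := by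
    intro h
    apply hA0
    have := congrArg star h
    rwa [hstar, ContinuousLinearMap.adjoint_adjoint, star_zero] at this
  have hs0' : s ≠ 0 := hs0 hAadj0
  -- Step 3: for every T ∈ S, A* T is a scalar multiple of 1.
  have step3 : ∀ T ∈ S, ∃ α : ℂ, star A * T = α • 1 := by
    intro T hT
    obtain ⟨r1, h1, -⟩ := key A hA
    obtain ⟨r2, h2, -⟩ := key T hT
    obtain ⟨r3, h3, -⟩ := key (A + T) (S.add_mem hA hT)
    obtain ⟨r4, h4, -⟩ := key (A + Complex.I • T) (S.add_mem hA (S.smul_mem _ hT))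
    have e3 : star A * T + star T * A = (r3 - r1 - r2) • 1 := by
      have expand : star A * A + (star A * T + star T * A) + star T * T = r3 • 1 := by
        rw [← h3, star_add]; noncomm_ring
      rw [h1, h2] at expand
      linear_combination (norm := module) expand
    have e4 : star A * T - star T * A = (- Complex.I * (r4 - r1 - r2)) • 1 := by
      have expand : r1 • (1 : H →L[ℂ] H) + Complex.I • (star A * T)
          + (-Complex.I) • (star T * A) + r2 • (1 : H →L[ℂ] H) = r4 • 1 := by
        rw [← h4, ← h1, ← h2, star_add, star_smul, Complex.star_def, Complex.conj_I]
        simp only [mul_add, add_mul, smul_mul_assoc, mul_smul_comm, smul_smul, smul_add]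
        rw [show (Complex.I * -Complex.I) = (1:ℂ) by simp [Complex.I_mul_I], one_smul]
        module
      have key2 : Complex.I • (star A * T - star T * A) = (r4 - r1 - r2) • 1 := by
        linear_combination (norm := module) expand
      have h5 := congrArg (fun X => (-Complex.I) • X) key2
      simp only [smul_smul] at h5
      rw [show (-Complex.I * Complex.I) = (1:ℂ) by simp [Complex.I_mul_I], one_smul] at h5
      rw [h5]
    refine ⟨((r3 - r1 - r2) + (- Complex.I * (r4 - r1 - r2))) / 2, ?_⟩
    have h6 : (2 : ℂ) • (star A * T)
        = ((r3 - r1 - r2) + (- Complex.I * (r4 - r1 - r2))) • 1 := by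
      linear_combination (norm := module) e3 + e4
    have h7 := congrArg (fun X => (2 : ℂ)⁻¹ • X) h6
    simp only [smul_smul] at h7
    rw [show ((2:ℂ)⁻¹ * 2) = (1:ℂ) by norm_num, one_smul] at h7
    rw [h7]
    congr 1
    ring
  -- Step 4: conclude.
  apply le_antisymm
  · intro T hT
    obtain ⟨α, hα⟩ := step3 T hT
    rw [Submodule.mem_span_singleton]
    refine ⟨s⁻¹ * α, ?_⟩
    have hmul : A * (star A * T) = A * (α • 1) := by rw [hα]
    rw [← mul_assoc, hs, smul_mul_assoc, one_mul, mul_smul_comm, mul_one] at hmul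
    -- hmul : s • T = α • A
    have h8 := congrArg (fun X => s⁻¹ • X) hmul
    simp only [smul_smul] at h8
    rw [inv_mul_cancel₀ hs0', one_smul] at h8
    exact h8.symm
  · rw [Submodule.span_le, Set.singleton_subset_iff]
    exact hA
end

section
/- Let H be a complex Hilbert space, S an MI-space in B(H), and A ∈ S a nonzero operator. Then for B ∈ B(H), the product A∘B belongs to S if and only if B is a scalar multiple of the identity; that is, {B ∈ B(H) : AB ∈ S} = ℂ·I. -/
local notation "⟪" x ", " y "⟫" => (inner ℂ x y : ℂ)

lemma MI_inner_const {H : Type*} [NormedAddCommGroup H] [InnerProductSpace ℂ H]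
    {T : H →L[ℂ] H} (h : ScalarMultipleOfIsometry T) :
    ∃ a : ℂ, ∀ x y : H, ⟪T x, T y⟫ = a * ⟪x, y⟫ := by
  obtain ⟨c, V, hV, rfl⟩ := h
  have hnorm : ∀ u : H, ‖V u‖ = ‖u‖ := fun u =>
    hV.norm_map_of_map_zero (map_zero V) u
  let Vi : H →ₗᵢ[ℂ] H := ⟨V.toLinearMap, hnorm⟩
  refine ⟨starRingEnd ℂ c * c, fun x y => ?_⟩
  have hmap : ⟪V x, V y⟫ = ⟪x, y⟫ := Vi.inner_map_map x y
  simp only [ContinuousLinearMap.smul_apply, inner_smul_left, inner_smul_right, hmap]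
  ring

lemma MI_cross {H : Type*} [NormedAddCommGroup H] [InnerProductSpace ℂ H]
    (S : Submodule ℂ (H →L[ℂ] H)) (hS : ∀ T ∈ S, ScalarMultipleOfIsometry T)
    {P Q : H →L[ℂ] H} (hP : P ∈ S) (hQ : Q ∈ S) :
    ∃ μ : ℂ, ∀ x y : H, ⟪P x, Q y⟫ = μ * ⟪x, y⟫ := by
  obtain ⟨a, ha⟩ := MI_inner_const (hS P hP)
  obtain ⟨b, hb⟩ := MI_inner_const (hS Q hQ)
  obtain ⟨c, hc⟩ := MI_inner_const (hS (P + Q) (S.add_mem hP hQ))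
  obtain ⟨d, hd⟩ := MI_inner_const (hS (P + Complex.I • Q)
    (S.add_mem hP (S.smul_mem _ hQ)))
  refine ⟨((c - a - b) - Complex.I * (d - a - b)) / 2, fun x y => ?_⟩
  have h3 := hc x y
  have h4 := hd x y
  simp only [ContinuousLinearMap.add_apply, ContinuousLinearMap.smul_apply,
    inner_add_left, inner_add_right, inner_smul_left, inner_smul_right,
    Complex.conj_I] at h3 h4
  have hI := Complex.I_mul_I
  have e1 : ⟪P x, Q y⟫ + ⟪Q x, P y⟫ = (c - a - b) * ⟪x, y⟫ := by
    linear_combination h3 - ha x y - hb x y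
  have e2 : Complex.I * ⟪P x, Q y⟫ - Complex.I * ⟪Q x, P y⟫
      = (d - a - b) * ⟪x, y⟫ := by
    linear_combination h4 - ha x y - hb x y + ⟪Q x, Q y⟫ * hI
  linear_combination e1 / 2 - (Complex.I / 2) * e2
    + (⟪P x, Q y⟫ / 2 - ⟪Q x, P y⟫ / 2) * hI

theorem stmt_12 {H : Type*} [NormedAddCommGroup H] [InnerProductSpace ℂ H] [CompleteSpace H]
    (S : Submodule ℂ (H →L[ℂ] H))
    (hS : ∀ T ∈ S, ScalarMultipleOfIsometry T)
    (A : H →L[ℂ] H) (hA : A ∈ S) (hA0 : A ≠ 0) :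
    {B : H →L[ℂ] H | A * B ∈ S} = {B : H →L[ℂ] H | ∃ c : ℂ, B = c • 1} := by
  ext B
  simp only [Set.mem_setOf_eq]
  constructor
  · intro hB
    obtain ⟨a, ha⟩ := MI_inner_const (hS A hA)
    obtain ⟨μ, hμ⟩ := MI_cross S hS hA hB
    obtain ⟨x₀, hx₀⟩ : ∃ x, A x ≠ 0 := by
      by_contra h
      push_neg at h
      exact hA0 (ContinuousLinearMap.ext fun x => by simpa using h x)
    have ha0 : a ≠ 0 := by
      intro h
      have h1 := ha x₀ x₀
      rw [h, zero_mul] at h1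
      exact hx₀ (inner_self_eq_zero.mp h1)
    refine ⟨μ / a, ?_⟩
    ext y
    have key : ∀ x : H, ⟪x, a • B y - μ • y⟫ = 0 := by
      intro x
      have h1 := ha x (B y)
      have h2 := hμ x y
      simp only [ContinuousLinearMap.mul_apply] at h2
      rw [inner_sub_right, inner_smul_right, inner_smul_right]
      linear_combination h2 - h1
    have hz : a • B y - μ • y = 0 := inner_self_eq_zero.mp (key _)
    have h' : a • B y = μ • y := sub_eq_zero.mp hz
    have : B y = (μ / a) • y := by
      rw [div_eq_inv_mul, ← smul_smul, ← h', inv_smul_smul₀ ha0]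
    simpa using this
  · rintro ⟨c, rfl⟩
    have : A * (c • 1) = c • A := by ext x; simp
    rw [this]
    exact S.smul_mem c hA
end

section
/- Let H be a complex Hilbert space and S an MI-space in B(H) with S ≠ ℂ·I (S is not the set of scalar multiples of the identity). If A, B ∈ S with A ≠ 0, then the product A∘B belongs to S if and only if B = 0. -/
open scoped ComplexInnerProductSpace

section Aux

variable {H : Type*} [NormedAddCommGroup H] [InnerProductSpace ℂ H]

lemma smi_norm (T : H →L[ℂ] H) (h : ScalarMultipleOfIsometry T) :
    ∃ a : ℝ, 0 ≤ a ∧ ∀ x, ‖T x‖ = a * ‖x‖ := by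
  obtain ⟨c, V, hV, rfl⟩ := h
  refine ⟨‖c‖, norm_nonneg _, fun x => ?_⟩
  have : ‖V x‖ = ‖x‖ := hV.norm_map_of_map_zero (map_zero V) x
  simp [norm_smul, this]

lemma pair_inner (T U : H →L[ℂ] H)
    (hT : ScalarMultipleOfIsometry T) (hU : ScalarMultipleOfIsometry U)
    (hTU : ScalarMultipleOfIsometry (T + U))
    (hTiU : ScalarMultipleOfIsometry (T + Complex.I • U)) :
    ∃ c : ℂ, ∀ x, ⟪T x, U x⟫ = c * ((‖x‖ ^ 2 : ℝ) : ℂ) := by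
  obtain ⟨a, -, ha⟩ := smi_norm T hT
  obtain ⟨b, -, hb⟩ := smi_norm U hU
  obtain ⟨s, -, hs⟩ := smi_norm _ hTU
  obtain ⟨t, -, ht⟩ := smi_norm _ hTiU
  set k : ℝ := (s ^ 2 - a ^ 2 - b ^ 2) / 2 with hk
  set m : ℝ := -((t ^ 2 - a ^ 2 - b ^ 2) / 2) with hm
  have hre : ∀ x, (⟪T x, U x⟫).re = k * ‖x‖ ^ 2 := by
    intro x
    have h1 : ‖T x + U x‖ ^ 2 = ‖T x‖ ^ 2 + 2 * (⟪T x, U x⟫).re + ‖U x‖ ^ 2 := by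
      have := norm_add_sq (𝕜 := ℂ) (T x) (U x)
      simpa using this
    have h2 : ‖T x + U x‖ = s * ‖x‖ := by
      have := hs x; simpa using this
    rw [h2, ha x, hb x] at h1
    rw [hk]; linear_combination -h1 / 2
  have him : ∀ x, (⟪T x, U x⟫).im = m * ‖x‖ ^ 2 := by
    intro x
    have h1 : ‖T x + Complex.I • U x‖ ^ 2
        = ‖T x‖ ^ 2 + 2 * (⟪T x, Complex.I • U x⟫).re + ‖Complex.I • U x‖ ^ 2 := by
      have := norm_add_sq (𝕜 := ℂ) (T x) (Complex.I • U x)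
      exact this
    have h2 : ‖T x + Complex.I • U x‖ = t * ‖x‖ := by
      have := ht x; simpa using this
    have h3 : ‖Complex.I • U x‖ = ‖U x‖ := by
      simp [norm_smul]
    have h4 : (⟪T x, Complex.I • U x⟫).re = -(⟪T x, U x⟫).im := by
      rw [inner_smul_right]
      simp [Complex.mul_re]
    rw [h2, h3, ha x, hb x, h4] at h1
    rw [hm]; linear_combination h1 / 2
  refine ⟨⟨k, m⟩, fun x => ?_⟩
  apply Complex.ext
  · simp only [Complex.mul_re, Complex.ofReal_re, Complex.ofReal_im, hre x]
    ring
  · simp only [Complex.mul_im, Complex.ofReal_re, Complex.ofReal_im, him x]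
    ring

lemma eq_smul_one_of_inner {B : H →L[ℂ] H} {μ : ℂ}
    (h : ∀ x, ⟪B x, x⟫ = μ * ((‖x‖ ^ 2 : ℝ) : ℂ)) :
    B = (starRingEnd ℂ) μ • 1 := by
  have : (B : H →ₗ[ℂ] H) = ((starRingEnd ℂ) μ • 1 : H →L[ℂ] H) := by
    rw [← ext_inner_map]
    intro x
    simp only [ContinuousLinearMap.coe_coe]
    rw [h x]
    simp [inner_smul_left, inner_self_eq_norm_sq_to_K]
  exact ContinuousLinearMap.coe_injective this

end Aux

theorem stmt_13 {H : Type*} [NormedAddCommGroup H] [InnerProductSpace ℂ H] [CompleteSpace H]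
    (S : Submodule ℂ (H →L[ℂ] H))
    (hS : ∀ T ∈ S, ScalarMultipleOfIsometry T)
    (hSne : S ≠ Submodule.span ℂ {(1 : H →L[ℂ] H)})
    (A B : H →L[ℂ] H) (hA : A ∈ S) (hB : B ∈ S) (hA0 : A ≠ 0) :
    A * B ∈ S ↔ B = 0 := by
  constructor
  · intro hAB
    obtain ⟨a, ha0, ha⟩ := smi_norm A (hS A hA)
    have hapos : a ≠ 0 := by
      intro h
      apply hA0
      ext x
      have := ha x
      rw [h, zero_mul, norm_eq_zero] at this
      simpa using this
    -- adjoint A ∘L A = a² • 1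
    have hadj : ContinuousLinearMap.adjoint A ∘L A = ((a : ℂ) ^ 2) • 1 := by
      have h1 : ∀ x, ⟪(ContinuousLinearMap.adjoint A ∘L A) x, x⟫
          = ((a : ℂ) ^ 2) * ((‖x‖ ^ 2 : ℝ) : ℂ) := by
        intro x
        have : ⟪ContinuousLinearMap.adjoint A (A x), x⟫ = ⟪A x, A x⟫ :=
          ContinuousLinearMap.adjoint_inner_left A x (A x)
        rw [ContinuousLinearMap.comp_apply, this, inner_self_eq_norm_sq_to_K, ha x]
        norm_cast
        exact congrArg _ (mul_pow a ‖x‖ 2)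
      have := eq_smul_one_of_inner h1
      rwa [show (starRingEnd ℂ) ((a : ℂ) ^ 2) = ((a : ℂ) ^ 2) by
        simp [map_pow, Complex.conj_ofReal]] at this
    -- pairing A*B with A
    obtain ⟨c, hc⟩ := pair_inner (A * B) A (hS _ hAB) (hS _ hA)
      (hS _ (S.add_mem hAB hA)) (hS _ (S.add_mem hAB (S.smul_mem _ hA)))
    set μ : ℂ := c / (a : ℂ) ^ 2 with hμ
    have hBx : ∀ x, ⟪B x, x⟫ = μ * ((‖x‖ ^ 2 : ℝ) : ℂ) := by
      intro x
      have h1 : ⟪(A * B) x, A x⟫ = c * ((‖x‖ ^ 2 : ℝ) : ℂ) := hc x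
      have h2 : ⟪ContinuousLinearMap.adjoint A ((A * B) x), x⟫ = ⟪(A * B) x, A x⟫ :=
        ContinuousLinearMap.adjoint_inner_left A x ((A * B) x)
      have h3 : ContinuousLinearMap.adjoint A ((A * B) x)
          = ((a : ℂ) ^ 2) • B x := by
        have : ContinuousLinearMap.adjoint A ((A * B) x)
            = (ContinuousLinearMap.adjoint A ∘L A) (B x) := rfl
        rw [this, hadj]
        simp
      rw [h3] at h2
      rw [inner_smul_left] at h2
      have ha2 : ((starRingEnd ℂ) ((a : ℂ) ^ 2)) = ((a : ℂ) ^ 2) := by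
        simp [map_pow, Complex.conj_ofReal]
      rw [ha2, h1] at h2
      have ha2ne : ((a : ℂ) ^ 2) ≠ 0 := by
        simp [hapos]
      push_cast at h2 ⊢
      field_simp [hμ]
      have hinv : ((a : ℂ))⁻¹ ^ 2 * (a : ℂ) ^ 2 = 1 := by
        rw [← mul_pow, inv_mul_cancel₀ (by exact_mod_cast hapos), one_pow]
      linear_combination ((a : ℂ))⁻¹ ^ 2 * h2 - ⟪B x, x⟫ * hinv
    have hBeq : B = (starRingEnd ℂ) μ • 1 := eq_smul_one_of_inner hBx
    by_cases hμ0 : μ = 0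
    · rw [hBeq, hμ0]; simp
    · exfalso
      apply hSne
      have hone : (1 : H →L[ℂ] H) ∈ S := by
        have : ((starRingEnd ℂ) μ)⁻¹ • B = (1 : H →L[ℂ] H) := by
          rw [hBeq, smul_smul, inv_mul_cancel₀ (by simpa using hμ0)]
          simp
        rw [← this]
        exact S.smul_mem _ hB
      apply le_antisymm
      · intro T hT
        obtain ⟨c', hc'⟩ := pair_inner T 1 (hS _ hT) (hS _ hone)
          (hS _ (S.add_mem hT hone)) (hS _ (S.add_mem hT (S.smul_mem _ hone)))
        have hTx : ∀ x, ⟪T x, x⟫ = c' * ((‖x‖ ^ 2 : ℝ) : ℂ) := by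
          intro x; simpa using hc' x
        have := eq_smul_one_of_inner hTx
        rw [Submodule.mem_span_singleton]
        exact ⟨(starRingEnd ℂ) c', by rw [this]⟩
      · rw [Submodule.span_le, Set.singleton_subset_iff]
        exact hone
  · rintro rfl
    rw [mul_zero]
    exact S.zero_mem
end

section
/- Let H be a complex Hilbert space and S an MI-space in B(H) with S ≠ ℂ·I (S is not the set of scalar multiples of the identity). If A ∈ S is such that A² = A∘A also belongs to S, then A = 0. -/
lemma mi_inner {H : Type*} [NormedAddCommGroup H] [InnerProductSpace ℂ H]
    (T : H →L[ℂ] H) (h : ScalarMultipleOfIsometry T) :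
    ∃ k : ℝ, 0 ≤ k ∧ ∀ x y : H, (inner ℂ (T x) (T y) : ℂ) = (k : ℂ) * inner ℂ x y := by
  obtain ⟨c, V, hV, rfl⟩ := h
  refine ⟨‖c‖ ^ 2, by positivity, fun x y => ?_⟩
  have hn : ∀ z : H, ‖V z‖ = ‖z‖ :=
    (AddMonoidHomClass.isometry_iff_norm (V : H →+ H)).mp hV
  have hVi : (inner ℂ (V x) (V y) : ℂ) = inner ℂ x y :=
    (⟨V.toLinearMap, hn⟩ : H →ₗᵢ[ℂ] H).inner_map_map x y
  simp only [ContinuousLinearMap.smul_apply, inner_smul_left, inner_smul_right, hVi]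
  rw [← mul_assoc, Complex.mul_conj, Complex.normSq_eq_norm_sq]

lemma mi_polar {H : Type*} [NormedAddCommGroup H] [InnerProductSpace ℂ H]
    (S : Submodule ℂ (H →L[ℂ] H)) (hS : ∀ T ∈ S, ScalarMultipleOfIsometry T)
    (T U : H →L[ℂ] H) (hT : T ∈ S) (hU : U ∈ S) :
    ∃ μ : ℂ, ∀ x y : H, (inner ℂ (T x) (U y) : ℂ) = μ * inner ℂ x y := by
  obtain ⟨kT, _, hkT⟩ := mi_inner T (hS T hT)
  obtain ⟨kU, _, hkU⟩ := mi_inner U (hS U hU)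
  obtain ⟨a, _, ha⟩ := mi_inner (T + U) (hS _ (S.add_mem hT hU))
  obtain ⟨b, _, hb⟩ := mi_inner (T + Complex.I • U)
    (hS _ (S.add_mem hT (S.smul_mem _ hU)))
  refine ⟨((a : ℂ) - kT - kU - Complex.I * ((b : ℂ) - kT - kU)) / 2, fun x y => ?_⟩
  have h1 := ha x y
  have h2 := hb x y
  simp only [ContinuousLinearMap.add_apply, ContinuousLinearMap.smul_apply,
    inner_add_left, inner_add_right, inner_smul_left, inner_smul_right,
    Complex.conj_I, hkT, hkU] at h1 h2
  linear_combination (1 / 2 : ℂ) * h1 - (Complex.I / 2) * h2 +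
    ((inner ℂ (T x) (U y) - inner ℂ (U x) (T y) - kU * inner ℂ x y : ℂ) / 2) * Complex.I_mul_I +
    ((inner ℂ x y : ℂ) * kU * (1 - Complex.I) / 2) * Complex.I_mul_I

theorem stmt_14 {H : Type*} [NormedAddCommGroup H] [InnerProductSpace ℂ H] [CompleteSpace H]
    (S : Submodule ℂ (H →L[ℂ] H))
    (hS : ∀ T ∈ S, ScalarMultipleOfIsometry T)
    (hSne : S ≠ Submodule.span ℂ {(1 : H →L[ℂ] H)})
    (A : H →L[ℂ] H) (hA : A ∈ S) (hA2 : A * A ∈ S) :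
    A = 0 := by
  obtain ⟨k, hk0, hk⟩ := mi_inner A (hS A hA)
  by_cases hkz : (k : ℂ) = 0
  · ext x
    have h := hk x x
    rw [hkz, zero_mul, inner_self_eq_zero] at h
    simpa using h
  · obtain ⟨μ, hμ⟩ := mi_polar S hS A (A * A) hA hA2
    have hAeq : ∀ y, A y = (μ / k) • y := by
      intro y
      have key : ∀ x : H, (inner ℂ x ((k : ℂ) • A y - μ • y) : ℂ) = 0 := by
        intro x
        have h := hμ x y
        rw [ContinuousLinearMap.mul_apply, hk x (A y)] at h
        simp only [inner_sub_right, inner_smul_right]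
        linear_combination h
      have h0 := key ((k : ℂ) • A y - μ • y)
      rw [inner_self_eq_zero, sub_eq_zero] at h0
      rw [div_eq_inv_mul, ← smul_smul, ← h0, smul_smul, inv_mul_cancel₀ hkz, one_smul]
    by_cases hl : μ / k = 0
    · ext y
      simp [hAeq, hl]
    · exfalso
      apply hSne
      apply le_antisymm
      · intro T hT
        obtain ⟨ν, hν⟩ := mi_polar S hS A T hA hT
        have hcl : (starRingEnd ℂ) (μ / k) ≠ 0 := by
          simpa using hl
        have hT' : ∀ y, T y = (ν / (starRingEnd ℂ) (μ / k)) • y := by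
          intro y
          have key : ∀ x : H, (inner ℂ x ((starRingEnd ℂ) (μ / k) • T y - ν • y) : ℂ) = 0 := by
            intro x
            have h := hν x y
            rw [hAeq x] at h
            rw [inner_smul_left] at h
            simp only [inner_sub_right, inner_smul_right]
            linear_combination h
          have h0 := key ((starRingEnd ℂ) (μ / k) • T y - ν • y)
          rw [inner_self_eq_zero, sub_eq_zero] at h0
          rw [div_eq_inv_mul, ← smul_smul, ← h0, smul_smul, inv_mul_cancel₀ hcl, one_smul]
        refine Submodule.mem_span_singleton.mpr ⟨ν / (starRingEnd ℂ) (μ / k), ?_⟩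
        ext y
        simp [hT' y]
      · rw [Submodule.span_le, Set.singleton_subset_iff]
        have h1 : (1 : H →L[ℂ] H) = (μ / k)⁻¹ • A := by
          ext y
          rw [ContinuousLinearMap.one_apply, ContinuousLinearMap.smul_apply, hAeq,
            smul_smul, inv_mul_cancel₀ hl, one_smul]
        rw [SetLike.mem_coe, h1]
        exact S.smul_mem _ hA
end

section
/- (Commutator Identity) Let H be a complex Hilbert space and A, B ∈ B(H) operators for which there exist scalars a, b, c ∈ ℂ with A*A = a·I, B*B = b·I, and B*A = c·I. Then the commutator [A,B] = AB − BA satisfies [A,B]*[A,B] = 2(ab − |c|²)·I. In particular, for A, B in an MI-space S with inner product ⟨A,B⟩ defined by B*A = ⟨A,B⟩·I, one has [A,B]*[A,B] = 2(‖A‖²‖B‖² − |⟨A,B⟩|²)·I, since a = ‖A‖² and b = ‖B‖². -/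
theorem stmt_15 {H : Type*} [NormedAddCommGroup H] [InnerProductSpace ℂ H] [CompleteSpace H]
    (A B : H →L[ℂ] H) (a b c : ℂ)
    (ha : ContinuousLinearMap.adjoint A * A = a • (1 : H →L[ℂ] H))
    (hb : ContinuousLinearMap.adjoint B * B = b • (1 : H →L[ℂ] H))
    (hc : ContinuousLinearMap.adjoint B * A = c • (1 : H →L[ℂ] H)) :
    ContinuousLinearMap.adjoint (A * B - B * A) * (A * B - B * A) =
      (2 * (a * b - (‖c‖ : ℂ) ^ 2)) • (1 : H →L[ℂ] H) := by
  have hA : star A * A = a • (1 : H →L[ℂ] H) := by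
    rw [ContinuousLinearMap.star_eq_adjoint]; exact ha
  have hB : star B * B = b • (1 : H →L[ℂ] H) := by
    rw [ContinuousLinearMap.star_eq_adjoint]; exact hb
  have hC : star B * A = c • (1 : H →L[ℂ] H) := by
    rw [ContinuousLinearMap.star_eq_adjoint]; exact hc
  have hC' : star A * B = (starRingEnd ℂ c) • (1 : H →L[ℂ] H) := by
    have := congrArg star hC
    simpa [star_mul, star_smul] using this
  have key : star (A * B - B * A) * (A * B - B * A) =
      (2 * (a * b - (‖c‖ : ℂ) ^ 2)) • (1 : H →L[ℂ] H) := by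
    have e1 : star B * star A * (A * B) = (a * b) • (1 : H →L[ℂ] H) := by
      rw [mul_assoc, ← mul_assoc (star A), hA, smul_mul_assoc, one_mul, mul_smul_comm, hB,
        smul_smul]
    have e2 : star B * star A * (B * A) = ((starRingEnd ℂ c) * c) • (1 : H →L[ℂ] H) := by
      rw [mul_assoc, ← mul_assoc (star A), hC', smul_mul_assoc, one_mul, mul_smul_comm, hC,
        smul_smul]
    have e3 : star A * star B * (A * B) = (c * starRingEnd ℂ c) • (1 : H →L[ℂ] H) := by
      rw [mul_assoc, ← mul_assoc (star B), hC, smul_mul_assoc, one_mul, mul_smul_comm, hC',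
        smul_smul]
    have e4 : star A * star B * (B * A) = (b * a) • (1 : H →L[ℂ] H) := by
      rw [mul_assoc, ← mul_assoc (star B), hB, smul_mul_assoc, one_mul, mul_smul_comm, hA,
        smul_smul]
    have hcc : (starRingEnd ℂ c) * c = (‖c‖ : ℂ) ^ 2 := by
      rw [← Complex.normSq_eq_conj_mul_self, Complex.normSq_eq_norm_sq]
      push_cast
      ring
    rw [star_sub, star_mul, star_mul, sub_mul, mul_sub, mul_sub, e1, e2, e3, e4,
      mul_comm (c) (starRingEnd ℂ c), hcc]
    rw [← sub_smul, ← sub_smul, ← sub_smul, mul_comm b a]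
    ring_nf
  rw [← ContinuousLinearMap.star_eq_adjoint]
  exact key
end

section
/- Let H be a complex Hilbert space and S an MI-space in B(H). Then for all A, B ∈ S, the commutator [A,B] = AB − BA is itself a scalar multiple of an isometry. -/
open scoped ComplexInnerProductSpace

lemma smi_inner {H : Type*} [NormedAddCommGroup H] [InnerProductSpace ℂ H]
    {T : H →L[ℂ] H} (h : ScalarMultipleOfIsometry T) :
    ∃ r : ℂ, ∀ x y : H, ⟪T x, T y⟫ = r * ⟪x, y⟫ := by
  obtain ⟨c, V, hV, rfl⟩ := h
  refine ⟨(starRingEnd ℂ) c * c, fun x y => ?_⟩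
  have hVn : ∀ x : H, ‖V x‖ = ‖x‖ := fun x => hV.norm_map_of_map_zero (map_zero V) x
  have hinner := (LinearMap.norm_map_iff_inner_map_map (𝕜 := ℂ) V).mp hVn
  simp only [ContinuousLinearMap.smul_apply, inner_smul_left, inner_smul_right, hinner]
  ring

lemma smi_of_norm {H : Type*} [NormedAddCommGroup H] [InnerProductSpace ℂ H]
    (T : H →L[ℂ] H) (r : ℝ) (h : ∀ x : H, ‖T x‖ ^ 2 = r * ‖x‖ ^ 2) :
    ScalarMultipleOfIsometry T := by
  by_cases h0 : ∀ x : H, T x = 0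
  · exact ⟨0, ContinuousLinearMap.id ℂ H, isometry_id, by ext x; simp [h0 x]⟩
  · push_neg at h0
    obtain ⟨x₀, hx₀⟩ := h0
    have hTx₀ : 0 < ‖T x₀‖ := norm_pos_iff.mpr hx₀
    have hx₀' : 0 < ‖x₀‖ := by
      rcases eq_or_ne x₀ 0 with h' | h'
      · exact absurd (by simp [h']) hx₀
      · exact norm_pos_iff.mpr h'
    have hr : 0 < r := by nlinarith [h x₀]
    set s := Real.sqrt r with hs
    have hs0 : 0 < s := Real.sqrt_pos.mpr hr
    have hTx : ∀ x : H, ‖T x‖ = s * ‖x‖ := by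
      intro x
      have h1 : ‖T x‖ ^ 2 = (s * ‖x‖) ^ 2 := by
        rw [mul_pow, hs, Real.sq_sqrt hr.le]; exact h x
      have h2 : 0 ≤ s * ‖x‖ := by positivity
      nlinarith [norm_nonneg (T x)]
    have hsne : (s : ℂ) ≠ 0 := by exact_mod_cast hs0.ne'
    refine ⟨(s : ℂ), (s : ℂ)⁻¹ • T, ?_, ?_⟩
    · apply AddMonoidHomClass.isometry_of_norm
      intro x
      have hn : ‖((s : ℂ))⁻¹‖ = s⁻¹ := by simp [abs_of_pos hs0]
      simp only [ContinuousLinearMap.smul_apply, norm_smul, hTx x, hn]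
      field_simp
    · rw [smul_smul, mul_inv_cancel₀ hsne, one_smul]

theorem stmt_16 {H : Type*} [NormedAddCommGroup H] [InnerProductSpace ℂ H] [CompleteSpace H]
    (S : Submodule ℂ (H →L[ℂ] H))
    (hS : ∀ T ∈ S, ScalarMultipleOfIsometry T)
    (A B : H →L[ℂ] H) (hA : A ∈ S) (hB : B ∈ S) :
    ScalarMultipleOfIsometry (A * B - B * A) := by
  obtain ⟨a, ha⟩ := smi_inner (hS A hA)
  obtain ⟨b, hb⟩ := smi_inner (hS B hB)
  obtain ⟨g, hg⟩ := smi_inner (hS (A + B) (S.add_mem hA hB))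
  obtain ⟨d, hd⟩ := smi_inner (hS (A + Complex.I • B) (S.add_mem hA (S.smul_mem _ hB)))
  have hI : Complex.I * Complex.I = -1 := Complex.I_mul_I
  -- cross terms
  have hE1 : ∀ x y : H, ⟪A x, B y⟫ + ⟪B x, A y⟫ = (g - a - b) * ⟪x, y⟫ := by
    intro x y
    have := hg x y
    simp only [ContinuousLinearMap.add_apply, inner_add_left, inner_add_right,
      ha x y, hb x y] at this
    linear_combination this
  have hE2 : ∀ x y : H,
      Complex.I * ⟪A x, B y⟫ - Complex.I * ⟪B x, A y⟫ = (d - a - b) * ⟪x, y⟫ := by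
    intro x y
    have := hd x y
    simp only [ContinuousLinearMap.add_apply, ContinuousLinearMap.smul_apply,
      inner_add_left, inner_add_right, inner_smul_left, inner_smul_right,
      Complex.conj_I, ha x y, hb x y] at this
    linear_combination this + b * (inner ℂ x y : ℂ) * hI
  have hμ : ∀ x y : H, ⟪A x, B y⟫ = ((g - a - b) - Complex.I * (d - a - b)) / 2 * ⟪x, y⟫ := by
    intro x y
    have h1 := hE1 x y
    have h2 := hE2 x y
    linear_combination h1 / 2 - Complex.I / 2 * h2 +
      ((inner ℂ (A x) (B y) : ℂ) - (inner ℂ (B x) (A y) : ℂ)) / 2 * hI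
  have hν : ∀ x y : H, ⟪B x, A y⟫ = ((g - a - b) + Complex.I * (d - a - b)) / 2 * ⟪x, y⟫ := by
    intro x y
    linear_combination hE1 x y - hμ x y
  set μ : ℂ := ((g - a - b) - Complex.I * (d - a - b)) / 2 with hμdef
  set ν : ℂ := ((g - a - b) + Complex.I * (d - a - b)) / 2 with hνdef
  -- final computation
  have key : ∀ x : H, ⟪(A * B - B * A) x, (A * B - B * A) x⟫
      = (2 * a * b - 2 * μ * ν) * ⟪x, x⟫ := by
    intro x
    have e1 : ⟪A (B x), A (B x)⟫ = a * (b * ⟪x, x⟫) := by rw [ha, hb]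
    have e2 : ⟪A (B x), B (A x)⟫ = μ * (ν * ⟪x, x⟫) := by rw [hμ, hν]
    have e3 : ⟪B (A x), A (B x)⟫ = ν * (μ * ⟪x, x⟫) := by rw [hν, hμ]
    have e4 : ⟪B (A x), B (A x)⟫ = b * (a * ⟪x, x⟫) := by rw [hb, ha]
    simp only [ContinuousLinearMap.sub_apply, ContinuousLinearMap.mul_apply,
      inner_sub_left, inner_sub_right, e1, e2, e3, e4]
    ring
  apply smi_of_norm (A * B - B * A) (2 * a * b - 2 * μ * ν).re
  intro x
  have h1 := key x
  have h2 : ⟪(A * B - B * A) x, (A * B - B * A) x⟫ = ((‖(A * B - B * A) x‖ : ℂ)) ^ 2 :=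
    inner_self_eq_norm_sq_to_K _
  have h3 : ⟪x, x⟫ = ((‖x‖ : ℂ)) ^ 2 := inner_self_eq_norm_sq_to_K x
  rw [h2, h3] at h1
  have := congrArg Complex.re h1
  simpa [← Complex.ofReal_pow, Complex.mul_re] using this
end

section
/- Let H be a complex Hilbert space and S an MI-space in B(H). Then two operators A, B ∈ S commute (AB = BA) if and only if A and B are linearly dependent over ℂ. -/
open ContinuousLinearMap in
lemma smi_star_self {H : Type*} [NormedAddCommGroup H] [InnerProductSpace ℂ H] [CompleteSpace H]
    {T : H →L[ℂ] H}
    (h : ∃ (c : ℂ) (V : H →L[ℂ] H), Isometry V ∧ T = c • V) :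
    ∃ r : ℝ, 0 ≤ r ∧ adjoint T * T = (r : ℂ) • 1 ∧ (r = 0 → T = 0) := by
  obtain ⟨c, V, hV, rfl⟩ := h
  have hnorm : ∀ x, ‖V x‖ = ‖x‖ := fun x => by
    simpa using hV.norm_map_of_map_zero (map_zero V) x
  have hVV : adjoint V ∘L V = 1 := (norm_map_iff_adjoint_comp_self V).mp hnorm
  refine ⟨‖c‖ ^ 2, by positivity, ?_, ?_⟩
  · have hadj : adjoint (c • V) = star c • adjoint V := by
      simp [adjoint, map_smulₛₗ]
    rw [hadj, smul_mul_smul_comm]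
    rw [show adjoint V * V = 1 from hVV]
    congr 1
    rw [Complex.star_def, mul_comm, Complex.mul_conj']
    norm_cast
  · intro hr
    have : c = 0 := by
      have : ‖c‖ = 0 := by nlinarith [norm_nonneg c]
      simpa using this
    simp [this]

open ContinuousLinearMap in
lemma adjoint_smul'' {H : Type*} [NormedAddCommGroup H] [InnerProductSpace ℂ H] [CompleteSpace H]
    (c : ℂ) (T : H →L[ℂ] H) : adjoint (c • T) = star c • adjoint T := by
  simp [adjoint, map_smulₛₗ]

open ContinuousLinearMap in
lemma smi_cross {H : Type*} [NormedAddCommGroup H] [InnerProductSpace ℂ H] [CompleteSpace H]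
    (S : Submodule ℂ (H →L[ℂ] H))
    (h1 : ∀ T ∈ S, ∃ r : ℝ, 0 ≤ r ∧ adjoint T * T = (r : ℂ) • 1)
    {A B : H →L[ℂ] H} (hA : A ∈ S) (hB : B ∈ S) :
    ∃ γ : ℂ, adjoint A * B = γ • 1 := by
  obtain ⟨α, -, hα⟩ := h1 A hA
  obtain ⟨β, -, hβ⟩ := h1 B hB
  obtain ⟨δ, -, hδ⟩ := h1 (A + B) (S.add_mem hA hB)
  obtain ⟨ε, -, hε⟩ := h1 (A + Complex.I • B) (S.add_mem hA (S.smul_mem _ hB))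
  set X := adjoint A * B with hX
  set Y := adjoint B * A with hY
  have hsum : X + Y = ((δ : ℂ) - α - β) • 1 := by
    have := hδ
    rw [map_add, add_mul, mul_add, mul_add, hα, hβ, ← hX, ← hY] at this
    have h2 : X + Y = (δ:ℂ) • 1 - (α:ℂ) • 1 - (β:ℂ) • 1 := by
      rw [← this]; abel
    rw [h2, ← sub_smul, ← sub_smul]
  have hdiff : X - Y = (-Complex.I * ((ε : ℂ) - α - β)) • 1 := by
    have := hε
    rw [map_add, adjoint_smul'', add_mul, mul_add, mul_add, hα] at this
    rw [smul_mul_assoc, smul_mul_assoc, mul_smul_comm, mul_smul_comm, hβ, ← hX, ← hY] at this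
    have hstar : star Complex.I = -Complex.I := by simp
    rw [hstar] at this
    -- this : α•1 + I•X + ((-I)•Y + (-I)•(I•(β•1))) = ε•1
    have h3 : Complex.I • X - Complex.I • Y = (ε:ℂ) • 1 - (α:ℂ) • 1 - (β:ℂ) • 1 := by
      have hb : (-Complex.I) • (Complex.I • ((β:ℂ) • (1 : H →L[ℂ] H))) = (β:ℂ) • 1 := by
        rw [smul_smul, smul_smul]
        congr 1
        simp [Complex.I_mul_I]
      rw [hb] at this
      have : Complex.I • X + (-Complex.I) • Y = (ε:ℂ)•1 - (α:ℂ)•1 - (β:ℂ)•1 := by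
        rw [← this]; abel
      rw [← this]; module
    have h4 : X - Y = (-Complex.I) • (Complex.I • X - Complex.I • Y) := by
      rw [smul_sub, smul_smul, smul_smul]
      simp [Complex.I_mul_I]
    rw [h4, h3]
    module
  refine ⟨(((δ:ℂ) - α - β) + (-Complex.I * ((ε:ℂ) - α - β))) / 2, ?_⟩
  have h2X : (2:ℂ) • X = (((δ:ℂ) - α - β) + (-Complex.I * ((ε:ℂ) - α - β))) • 1 := by
    have : (2:ℂ) • X = (X + Y) + (X - Y) := by module
    rw [this, hsum, hdiff, ← add_smul]
  have := congrArg (fun Z => ((2:ℂ)⁻¹) • Z) h2X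
  simpa [smul_smul, div_eq_inv_mul] using this

theorem stmt_18 {H : Type*} [NormedAddCommGroup H] [InnerProductSpace ℂ H] [CompleteSpace H]
    (S : Submodule ℂ (H →L[ℂ] H))
    (hS : ∀ T ∈ S, ScalarMultipleOfIsometry T)
    (A B : H →L[ℂ] H) (hA : A ∈ S) (hB : B ∈ S) :
    A * B = B * A ↔ ¬ LinearIndependent ℂ ![A, B] := by
  classical
  have h1 : ∀ T ∈ S, ∃ r : ℝ, 0 ≤ r ∧
      ContinuousLinearMap.adjoint T * T = (r : ℂ) • 1 ∧ (r = 0 → T = 0) :=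
    fun T hT => smi_star_self (hS T hT)
  constructor
  · intro hC
    by_cases hA0 : A = 0
    · rw [LinearIndependent.pair_iff]
      push_neg
      exact ⟨1, 0, by simp [hA0], by simp⟩
    · obtain ⟨α, hα0, hαeq, hα00⟩ := h1 A hA
      have hαne : (α : ℂ) ≠ 0 := by
        intro h
        exact hA0 (hα00 (by exact_mod_cast h))
      obtain ⟨γ, hγ⟩ :=
        smi_cross S (fun T hT => (h1 T hT).imp fun r ⟨ha, hb, _⟩ => ⟨ha, hb⟩) hA hB
      have key : (α : ℂ) • B = γ • A := by
        have e1 : ContinuousLinearMap.adjoint A * (A * B) = (α : ℂ) • B := by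
          rw [← mul_assoc, hαeq, smul_mul_assoc, one_mul]
        have e2 : ContinuousLinearMap.adjoint A * (B * A) = γ • A := by
          rw [← mul_assoc, hγ, smul_mul_assoc, one_mul]
        rw [← e1, ← e2, hC]
      rw [LinearIndependent.pair_iff]
      push_neg
      refine ⟨γ, -(α : ℂ), ?_, fun _ => neg_ne_zero.mpr hαne⟩
      rw [neg_smul, key, add_neg_cancel]
  · intro hdep
    rw [LinearIndependent.pair_iff] at hdep
    push_neg at hdep
    obtain ⟨s, t, hst, hne⟩ := hdep
    by_cases ht : t = 0
    · have hs : s ≠ 0 := fun h => hne h ht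
      have hA0 : A = 0 := by
        rw [ht, zero_smul, add_zero] at hst
        exact ((smul_eq_zero.mp hst).resolve_left hs)
      simp [hA0]
    · have h5 : t • B = (-s) • A := by
        rw [neg_smul]
        exact eq_neg_of_add_eq_zero_right hst
      have hBeq : B = (t⁻¹ * -s) • A := by
        rw [mul_smul, ← h5, smul_smul, inv_mul_cancel₀ ht, one_smul]
      rw [hBeq, mul_smul_comm, smul_mul_assoc]
end

section
/- Let H be a complex Hilbert space and S an MI-space in B(H). Then S is commutative (AB = BA for all A, B ∈ S) if and only if the dimension of S over ℂ is 0 or 1. -/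
open scoped InnerProductSpace

section Aux

variable {H : Type*} [NormedAddCommGroup H] [InnerProductSpace ℂ H]

lemma iso_inner_aux {V : H →L[ℂ] H} (hV : Isometry V) (x y : H) :
    ⟪V x, V y⟫_ℂ = ⟪x, y⟫_ℂ :=
  (LinearIsometry.mk (V : H →ₗ[ℂ] H)
    ((AddMonoidHomClass.isometry_iff_norm V).mp hV)).inner_map_map x y

lemma smi_inner_aux {T : H →L[ℂ] H} (h : ScalarMultipleOfIsometry T) :
    ∃ c : ℝ, 0 ≤ c ∧ ∀ x y, ⟪T x, T y⟫_ℂ = (c : ℂ) * ⟪x, y⟫_ℂ := by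
  obtain ⟨c, V, hV, rfl⟩ := h
  refine ⟨Complex.normSq c, Complex.normSq_nonneg c, fun x y => ?_⟩
  simp only [ContinuousLinearMap.smul_apply, inner_smul_left, inner_smul_right,
    iso_inner_aux hV]
  rw [← Complex.mul_conj]
  ring

/-- Polarization: cross inner products are scalar multiples of the inner product. -/
lemma cross_inner_aux (S : Submodule ℂ (H →L[ℂ] H))
    (hS : ∀ T ∈ S, ScalarMultipleOfIsometry T)
    {A B : H →L[ℂ] H} (hA : A ∈ S) (hB : B ∈ S) :
    ∃ γ : ℂ, ∀ x y, ⟪A x, B y⟫_ℂ = γ * ⟪x, y⟫_ℂ := by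
  obtain ⟨cA, _, hcA⟩ := smi_inner_aux (hS A hA)
  obtain ⟨cB, _, hcB⟩ := smi_inner_aux (hS B hB)
  obtain ⟨cP, _, hcP⟩ := smi_inner_aux (hS (A + B) (S.add_mem hA hB))
  obtain ⟨cQ, _, hcQ⟩ := smi_inner_aux (hS (A + Complex.I • B)
    (S.add_mem hA (S.smul_mem _ hB)))
  refine ⟨(((cP : ℂ) - cA - cB) - Complex.I * ((cQ : ℂ) - cA - cB)) / 2, fun x y => ?_⟩
  have h1 : ⟪A x, B y⟫_ℂ + ⟪B x, A y⟫_ℂ = ((cP : ℂ) - cA - cB) * ⟪x, y⟫_ℂ := by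
    have := hcP x y
    simp only [ContinuousLinearMap.add_apply, inner_add_left, inner_add_right,
      hcA x y, hcB x y] at this
    linear_combination this
  have hI := Complex.I_sq
  have h2 : Complex.I * ⟪A x, B y⟫_ℂ - Complex.I * ⟪B x, A y⟫_ℂ
      = ((cQ : ℂ) - cA - cB) * ⟪x, y⟫_ℂ := by
    have := hcQ x y
    simp only [ContinuousLinearMap.add_apply, ContinuousLinearMap.smul_apply,
      inner_add_left, inner_add_right, inner_smul_left, inner_smul_right,
      hcA x y, hcB x y, Complex.conj_I] at this
    linear_combination this + ⟪x, y⟫_ℂ * (cB : ℂ) * hI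
  have h3 : ⟪A x, B y⟫_ℂ - ⟪B x, A y⟫_ℂ
      = -Complex.I * ((cQ : ℂ) - cA - cB) * ⟪x, y⟫_ℂ := by
    linear_combination -Complex.I * h2 + (⟪A x, B y⟫_ℂ - ⟪B x, A y⟫_ℂ) * hI
  linear_combination (h1 + h3) / 2

/-- Two commuting isometries with orthogonal ranges force `H = 0`. -/
lemma no_two_aux {V W : H →L[ℂ] H} (hV : Isometry V) (hW : Isometry W)
    (horth : ∀ x y, ⟪V x, W y⟫_ℂ = 0)
    (hcomm : ∀ z, V (W z) = W (V z)) (x : H) : x = 0 := by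
  have h1 : ⟪x, x⟫_ℂ = ⟪V (W x), V (W x)⟫_ℂ := by
    rw [iso_inner_aux hV, iso_inner_aux hW]
  have h2 : ⟪V (W x), V (W x)⟫_ℂ = ⟪V (W x), W (V x)⟫_ℂ := by rw [hcomm x]
  refine (inner_self_eq_zero (𝕜 := ℂ)).mp ?_
  rw [h1, h2]
  exact horth (W x) (V x)

end Aux

theorem stmt_19 {H : Type*} [NormedAddCommGroup H] [InnerProductSpace ℂ H] [CompleteSpace H]
    (S : Submodule ℂ (H →L[ℂ] H))
    (hS : ∀ T ∈ S, ScalarMultipleOfIsometry T) :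
    (∀ A ∈ S, ∀ B ∈ S, A * B = B * A) ↔
      Module.rank ℂ S = 0 ∨ Module.rank ℂ S = 1 := by
  have key : (∀ A ∈ S, ∀ B ∈ S, A * B = B * A) ↔ ∃ v₀, S ≤ ℂ ∙ v₀ := by
    constructor
    · intro hcomm
      by_cases hex : ∃ A ∈ S, A ≠ 0
      · obtain ⟨A, hAS, hA0⟩ := hex
        refine ⟨A, fun B hBS => ?_⟩
        obtain ⟨cA, hcA0, hcA⟩ := smi_inner_aux (hS A hAS)
        have hx : ∃ x, A x ≠ 0 := by
          by_contra h
          push_neg at h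
          exact hA0 (ContinuousLinearMap.ext fun x => by simp [h x])
        obtain ⟨x₀, hx₀⟩ := hx
        have hcAne : (cA : ℂ) ≠ 0 := by
          intro h
          apply hx₀
          have h2 := hcA x₀ x₀
          rw [h, zero_mul] at h2
          exact (inner_self_eq_zero (𝕜 := ℂ)).mp h2
        obtain ⟨γ, hγ⟩ := cross_inner_aux S hS hAS hBS
        set C := B - (γ / cA) • A with hCdef
        have hCS : C ∈ S := S.sub_mem hBS (S.smul_mem _ hAS)
        have hAC : ∀ x y, ⟪A x, C y⟫_ℂ = 0 := by
          intro x y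
          simp only [hCdef, ContinuousLinearMap.sub_apply, ContinuousLinearMap.smul_apply,
            inner_sub_right, inner_smul_right, hγ x y, hcA x y]
          field_simp
          ring
        have hC0 : C = 0 := by
          by_contra hC0
          obtain ⟨μ, W, hW, hCW⟩ := hS C hCS
          obtain ⟨lam, V, hV, hAV⟩ := hS A hAS
          have hμ : μ ≠ 0 := by rintro rfl; exact hC0 (by simp [hCW])
          have hlam : lam ≠ 0 := by rintro rfl; exact hA0 (by simp [hAV])
          have horth : ∀ x y, ⟪V x, W y⟫_ℂ = 0 := by
            intro x y
            have h2 := hAC x y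
            rw [hCW, hAV] at h2
            simp only [ContinuousLinearMap.smul_apply, inner_smul_left,
              inner_smul_right] at h2
            rcases mul_eq_zero.mp h2 with h | h
            · exact absurd h hμ
            rcases mul_eq_zero.mp h with h | h
            · exact absurd h (by simpa using hlam)
            · exact h
          have hcommVW : ∀ z, V (W z) = W (V z) := by
            have h := hcomm A hAS C hCS
            rw [hAV, hCW, smul_mul_smul_comm, smul_mul_smul_comm, mul_comm μ lam] at h
            have h2 : V * W = W * V :=
              smul_right_injective _ (mul_ne_zero hlam hμ) h
            intro z
            have h3 := congrArg (fun T : H →L[ℂ] H => T z) h2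
            simpa [ContinuousLinearMap.mul_apply] using h3
          have hx : ∃ x, C x ≠ 0 := by
            by_contra h
            push_neg at h
            exact hC0 (ContinuousLinearMap.ext fun x => by simp [h x])
          obtain ⟨x, hx⟩ := hx
          have hx0 : x ≠ 0 := fun h => hx (by simp [h])
          exact hx0 (no_two_aux hV hW horth hcommVW x)
        have hBA : B = (γ / cA) • A := by rwa [hCdef, sub_eq_zero] at hC0
        exact Submodule.mem_span_singleton.mpr ⟨γ / cA, hBA.symm⟩
      · push_neg at hex
        exact ⟨0, fun T hT => by rw [hex T hT]; exact Submodule.zero_mem _⟩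
    · rintro ⟨v₀, hv⟩ A hA B hB
      obtain ⟨a, rfl⟩ := Submodule.mem_span_singleton.mp (hv hA)
      obtain ⟨b, rfl⟩ := Submodule.mem_span_singleton.mp (hv hB)
      rw [smul_mul_smul_comm, smul_mul_smul_comm, mul_comm a b]
  rw [key, ← rank_submodule_le_one_iff' S]
  constructor
  · intro h
    rcases lt_or_eq_of_le h with h | h
    · exact Or.inl (Cardinal.lt_one_iff_zero.mp h)
    · exact Or.inr h
  · rintro (h | h) <;> simp [h]
end
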